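/- The orthogonal complement V^⊥ = {g : X → ℚ : Σ_{x∈X} f(x)g(x) = 0 for all f ∈ V} has a ℚ-basis consisting of integer-valued functions g each satisfying ‖g‖₁ = Σ_{x∈X} |g(x)| ≤ 2^{t+1}|ℱ|. -/

import Mathlib

open Finset

attribute [local instance] Classical.propDecidable

noncomputable section

/-- Positions: `(i, j)` stands for the `(j+1)`-st column of the `(i+1)`-st block,
i.e. the column `i*r + (j+1)` of `{1, ..., nr}`. -/
abbrev Pos (n r : ℕ) := Fin n × Fin r

/-- The set `X` of all functions `{1,...,nr} → {1,...,q}` (value `k` of `Fin q`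
standing for the symbol `k+1`). -/
abbrev XX (q n r : ℕ) := Pos n r → Fin q

/-- The subset `S = ⋃_{i=1}^n {(i-1)r+1, ..., (i-1)r+t_i}` of `{1,...,nr}` attached to a
tuple `(t_1,...,t_n)`: position `(i,j)` belongs to it iff `j < t_i`. -/
def blockSet (n r : ℕ) (tv : Fin n → ℕ) : Finset (Pos n r) :=
  Finset.univ.filter fun p => (p.2 : ℕ) < tv p.1

/-- The tuples `(t_1, ..., t_n)` with `0 ≤ t_i ≤ r` and `t_1 + ⋯ + t_n = t`. -/
def tuples (n r t : ℕ) : Finset (Fin n → ℕ) :=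
  (Fintype.piFinset fun _ : Fin n => Finset.range (r + 1)).filter fun tv => ∑ i, tv i = t

/-- The family `𝒮` of admissible `t`-subsets of `{1,...,nr}`. -/
def SS (n r t : ℕ) : Finset (Finset (Pos n r)) := (tuples n r t).image (blockSet n r)

/-- `Y` is a `t-(q,n,r,λ)` ordered orthogonal array. -/
def IsOOA (q n r t lam : ℕ) (Y : Finset (XX q n r)) : Prop :=
  Y.card = lam * q ^ t ∧
    ∀ tv ∈ tuples n r t, ∀ a : XX q n r,
      (Y.filter fun x => ∀ p ∈ blockSet n r tv, x p = a p).card = lam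

/-- `φ_a` for a function `a : S → {1,...,q}`. -/
def phi {q n r : ℕ} (S : Finset (Pos n r)) (a : ↥S → Fin q) (x : XX q n r) : ℚ :=
  if ∀ p : ↥S, x ↑p = a p then 1 else 0

/-- The index set `ℱ` of all functions `a : S → {1,...,q}` with `S ∈ 𝒮`. -/
def FF (q n r t : ℕ) : Finset (Σ S : Finset (Pos n r), ↥S → Fin q) :=
  (SS n r t).sigma fun _ => Finset.univ

/-- The vector space `V`, the `ℚ`-span of `{φ_a : a ∈ ℱ}`. -/
def VV (q n r t : ℕ) : Submodule ℚ (XX q n r → ℚ) :=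
  Submodule.span ℚ {f | ∃ a ∈ FF q n r t, f = phi a.1 a.2}

/-- The family `𝒮'` of all subsets of members of `𝒮`. -/
def SS' (n r t : ℕ) : Finset (Finset (Pos n r)) :=
  Finset.univ.filter fun T => ∃ S ∈ SS n r t, T ⊆ S

/-- The index set `ℱ'` of all functions `b : T → {1,...,q-1}` with `T ∈ 𝒮'`. -/
def FF' (q n r t : ℕ) : Finset (Σ T : Finset (Pos n r), ↥T → Fin (q - 1)) :=
  (SS' n r t).sigma fun _ => Finset.univ

/-- `φ_b` for a function `b : T → {1,...,q-1}` (values embedded into `{1,...,q}`). -/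
def phi' {q n r : ℕ} (T : Finset (Pos n r)) (b : ↥T → Fin (q - 1)) (x : XX q n r) : ℚ :=
  if ∀ p : ↥T, x ↑p = Fin.castLE (Nat.sub_le q 1) (b p) then 1 else 0

/-- The extension `x^b ∈ X` of `b : T → {1,...,q-1}`, taking the value `q` outside `T`. -/
def xb {q n r : ℕ} (hq : 1 ≤ q) (T : Finset (Pos n r)) (b : ↥T → Fin (q - 1)) : XX q n r :=
  fun p => if h : p ∈ T then Fin.castLE (Nat.sub_le q 1) (b ⟨p, h⟩) else ⟨q - 1, by omega⟩

/-- The partial order `⪯` on partial functions: `a ⪯ b` iff `b` extends `a`. -/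
def pre {q n r : ℕ} (a b : Σ T : Finset (Pos n r), ↥T → Fin (q - 1)) : Prop :=
  ∃ h : a.1 ⊆ b.1, ∀ p : ↥a.1, b.2 ⟨↑p, h p.2⟩ = a.2 p

/-- `γ_b(x) = (-1)^{|T| - |S|}` if `x = x^c` for some `c : S → {1,...,q-1}` in `ℱ'` with
`c ⪯ b`, and `γ_b(x) = 0` otherwise.  (Note that such a `c` is unique, with
`S = {p : x p ≠ q}`.) -/
def gamma (q n r t : ℕ) (hq : 1 ≤ q) (b : Σ T : Finset (Pos n r), ↥T → Fin (q - 1))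
    (x : XX q n r) : ℤ :=
  if ∃ c ∈ FF' q n r t, pre c b ∧ x = xb hq c.1 c.2 then
    (-1) ^ (b.1.card - (Finset.univ.filter fun p : Pos n r => ((x p : ℕ) ≠ q - 1)).card)
  else 0

namespace Stmt17

variable {q n r t m : ℕ}

lemma mem_SS' {T : Finset (Pos n r)} : T ∈ SS' n r t ↔ ∃ S ∈ SS n r t, T ⊆ S := by
  simp [SS']

lemma SS'_downward {T T' : Finset (Pos n r)} (h : T ∈ SS' n r t) (h' : T' ⊆ T) :
    T' ∈ SS' n r t := by
  rcases mem_SS'.1 h with ⟨S, hS, hTS⟩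
  exact mem_SS'.2 ⟨S, hS, h'.trans hTS⟩

lemma mem_FF' {c : Σ T : Finset (Pos n r), ↥T → Fin (q - 1)} :
    c ∈ FF' q n r t ↔ c.1 ∈ SS' n r t := by
  cases c; simp [FF', Finset.mem_sigma]

lemma mem_FF {a : Σ S : Finset (Pos n r), ↥S → Fin q} :
    a ∈ FF q n r t ↔ a.1 ∈ SS n r t := by
  cases a; simp [FF, Finset.mem_sigma]

lemma sigma_ext {c c' : Σ T : Finset (Pos n r), ↥T → Fin m} (h1 : c.1 = c'.1)
    (h2 : ∀ p (hp : p ∈ c.1) (hp' : p ∈ c'.1), c.2 ⟨p, hp⟩ = c'.2 ⟨p, hp'⟩) : c = c' := by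
  obtain ⟨T, f⟩ := c; obtain ⟨T', f'⟩ := c'
  dsimp at h1; subst h1
  simp only [Sigma.mk.inj_iff, heq_eq_eq, true_and]
  funext p
  exact h2 p.1 p.2 p.2

lemma card_filter_lt_fin {m : ℕ} (hm : m ≤ r) :
    ((univ : Finset (Fin r)).filter fun j : Fin r => (j : ℕ) < m).card = m := by
  rcases eq_or_lt_of_le hm with rfl | hlt
  · rw [Finset.filter_true_of_mem (fun j _ => j.isLt), Finset.card_univ, Fintype.card_fin]
  · have : ((univ : Finset (Fin r)).filter fun j : Fin r => (j : ℕ) < m) = Finset.Iio ⟨m, hlt⟩ := by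
      ext j
      simp [Finset.mem_Iio, Fin.lt_def]
    rw [this, Fin.card_Iio]

lemma card_blockSet {tv : Fin n → ℕ} (htv : ∀ i, tv i ≤ r) :
    (blockSet n r tv).card = ∑ i, tv i := by
  rw [blockSet, Finset.card_eq_sum_card_fiberwise (f := Prod.fst) (t := univ)
    (fun x _ => mem_univ _)]
  refine Finset.sum_congr rfl fun i _ => ?_
  rw [← card_filter_lt_fin (htv i)]
  refine Finset.card_bij' (fun p _ => p.2) (fun j _ => (i, j)) ?_ ?_ ?_ ?_
  · intro p hp
    simp only [Finset.mem_filter, Finset.mem_univ, true_and] at hp ⊢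
    obtain ⟨h1, h2⟩ := hp; subst h2; exact h1
  · intro j hj
    simp only [Finset.mem_filter, Finset.mem_univ, true_and] at hj ⊢
    exact ⟨hj, trivial⟩
  · intro p hp
    obtain ⟨p1, p2⟩ := p
    simp only [Finset.mem_filter] at hp
    obtain ⟨-, h2⟩ := hp
    subst h2
    rfl
  · intro j hj; rfl

lemma card_SS {S : Finset (Pos n r)} (hS : S ∈ SS n r t) : S.card = t := by
  rw [SS, Finset.mem_image] at hS
  obtain ⟨tv, htv, rfl⟩ := hS
  rw [tuples, Finset.mem_filter] at htv
  obtain ⟨hmem, hsum⟩ := htv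
  rw [Fintype.mem_piFinset] at hmem
  rw [card_blockSet (fun i => by have := Finset.mem_range.1 (hmem i); omega)]
  exact hsum

lemma card_SS'_le {T : Finset (Pos n r)} (hT : T ∈ SS' n r t) : T.card ≤ t := by
  obtain ⟨S, hS, hTS⟩ := mem_SS'.1 hT
  exact (Finset.card_le_card hTS).trans_eq (card_SS hS)

lemma SS_nonempty (hr : 1 ≤ r) (htnr : t ≤ n * r) : (SS n r t).Nonempty := by
  have key : ∀ N, ∑ i ∈ Finset.range N, min r (t - r * i) = min t (r * N) := by
    intro N
    induction N with
    | zero => simp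
    | succ N ih =>
      rw [Finset.sum_range_succ, ih]
      have hmul : r * (N + 1) = r * N + r := by ring
      rcases le_total t (r * N) with h | h
      · rw [min_eq_left h, (by omega : t - r * N = 0), Nat.min_zero, Nat.add_zero,
          min_eq_left (by omega)]
      · rcases le_total r (t - r * N) with h2 | h2
        · rw [min_eq_right h, min_eq_left h2, min_eq_right (by omega)]
          omega
        · rw [min_eq_right h, min_eq_right h2, min_eq_left (by omega)]
          omega
  refine ⟨blockSet n r (fun i => min r (t - r * (i : ℕ))), ?_⟩
  rw [SS, Finset.mem_image]
  refine ⟨_, ?_, rfl⟩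
  rw [tuples, Finset.mem_filter, Fintype.mem_piFinset]
  constructor
  · intro i; exact Finset.mem_range.2 (by omega)
  · rw [Fin.sum_univ_eq_sum_range (fun i => min r (t - r * i)) n, key n,
      min_eq_left (by rw [mul_comm r n]; exact htnr)]

end Stmt17
namespace Stmt17

variable {q n r t : ℕ}

/-- The support of `x`: positions where `x` is not the last symbol. -/
def suppx (x : XX q n r) : Finset (Pos n r) :=
  Finset.univ.filter fun p => ((x p : ℕ) ≠ q - 1)

/-- Replace `x` by the last symbol outside `T`. -/
def cutf (hq : 1 ≤ q) (x : XX q n r) (T : Finset (Pos n r)) : XX q n r :=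
  fun p => if p ∈ T then x p else ⟨q - 1, by omega⟩

lemma xb_mem (hq : 1 ≤ q) {T : Finset (Pos n r)} (b : ↥T → Fin (q - 1)) {p : Pos n r}
    (hp : p ∈ T) : xb hq T b p = Fin.castLE (Nat.sub_le q 1) (b ⟨p, hp⟩) := by
  rw [xb, dif_pos hp]

lemma xb_not_mem (hq : 1 ≤ q) {T : Finset (Pos n r)} (b : ↥T → Fin (q - 1)) {p : Pos n r}
    (hp : p ∉ T) : xb hq T b p = ⟨q - 1, by omega⟩ := by
  rw [xb, dif_neg hp]

lemma suppx_xb (hq : 1 ≤ q) (T : Finset (Pos n r)) (b : ↥T → Fin (q - 1)) :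
    suppx (xb hq T b) = T := by
  ext p
  simp only [suppx, Finset.mem_filter, Finset.mem_univ, true_and]
  by_cases hp : p ∈ T
  · rw [xb_mem hq b hp]
    simp only [Fin.coe_castLE]
    exact iff_of_true (by have := (b ⟨p, hp⟩).isLt; omega) hp
  · rw [xb_not_mem hq b hp]
    exact iff_of_false (by simp) hp

lemma xb_injOn (hq : 1 ≤ q) :
    Function.Injective
      (fun c : (Σ T : Finset (Pos n r), ↥T → Fin (q - 1)) => xb hq c.1 c.2) := by
  rintro ⟨T, f⟩ ⟨T', f'⟩ h
  dsimp at h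
  have hT : T = T' := by rw [← suppx_xb hq T f, ← suppx_xb hq T' f', h]
  subst hT
  refine sigma_ext rfl fun p hp hp' => ?_
  have := congrFun h p
  rw [xb_mem hq f hp, xb_mem hq f' hp] at this
  exact Fin.castLE_injective _ this

lemma phi'_xb (hq : 1 ≤ q) (c d : Σ T : Finset (Pos n r), ↥T → Fin (q - 1)) :
    phi' c.1 c.2 (xb hq d.1 d.2) = if pre c d then 1 else 0 := by
  rw [phi']
  refine if_congr ⟨fun h => ?_, fun h => ?_⟩ rfl rfl
  · have hsub : c.1 ⊆ d.1 := by
      intro p hp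
      have hp2 := h ⟨p, hp⟩
      by_contra hpd
      rw [xb_not_mem hq d.2 hpd] at hp2
      have h3 := congrArg (fun z : Fin q => (z : ℕ)) hp2
      simp only [Fin.coe_castLE] at h3
      have := (c.2 ⟨p, hp⟩).isLt
      omega
    refine ⟨hsub, fun p => ?_⟩
    have hp2 := h p
    rw [xb_mem hq d.2 (hsub p.2)] at hp2
    exact Fin.castLE_injective _ hp2
  · obtain ⟨hsub, hval⟩ := h
    intro p
    rw [xb_mem hq d.2 (hsub p.2), hval p]

lemma pre_refl (c : Σ T : Finset (Pos n r), ↥T → Fin (q - 1)) : pre c c :=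
  ⟨Finset.Subset.refl _, fun _ => rfl⟩

lemma pre_eq_of_fst_eq {c d : Σ T : Finset (Pos n r), ↥T → Fin (q - 1)}
    (h : pre c d) (h1 : c.1 = d.1) : c = d := by
  obtain ⟨hsub, hval⟩ := h
  exact sigma_ext h1 fun p hp hp' => (hval ⟨p, hp⟩).symm

end Stmt17
namespace Stmt17

variable {q n r : ℕ}

/-- The correction term supported on the points `x^c`. -/
def corr (hq : 1 ≤ q) (t : ℕ) (x₀ : XX q n r) : XX q n r → ℚ :=
  fun y => ∑ b ∈ FF' q n r t, phi' b.1 b.2 x₀ *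
    ∑ c ∈ (FF' q n r t).filter (fun c => pre c b),
      (-1 : ℚ) ^ (b.1.card - c.1.card) * (if y = xb hq c.1 c.2 then 1 else 0)

/-- The basis functions of `V^⊥`. -/
def gdef (hq : 1 ≤ q) (t : ℕ) (x₀ : XX q n r) : XX q n r → ℚ :=
  fun y => (if y = x₀ then 1 else 0) - corr hq t x₀ y

lemma sum_mul_delta (f : XX q n r → ℚ) (z : XX q n r) :
    ∑ y : XX q n r, f y * (if y = z then 1 else 0) = f z := by
  simp only [mul_ite, mul_one, mul_zero]
  rw [Finset.sum_ite_eq' Finset.univ z f, if_pos (Finset.mem_univ z)]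

lemma ip_gdef (hq : 1 ≤ q) (t : ℕ) (f : XX q n r → ℚ) (x₀ : XX q n r) :
    ∑ y : XX q n r, f y * gdef hq t x₀ y
      = f x₀ - ∑ b ∈ FF' q n r t, phi' b.1 b.2 x₀ *
          ∑ c ∈ (FF' q n r t).filter (fun c => pre c b),
            (-1 : ℚ) ^ (b.1.card - c.1.card) * f (xb hq c.1 c.2) := by
  unfold gdef corr
  simp only [mul_sub]
  rw [Finset.sum_sub_distrib]
  congr 1
  · exact sum_mul_delta f x₀
  · simp only [Finset.mul_sum]
    rw [Finset.sum_comm]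
    refine Finset.sum_congr rfl fun b _ => ?_
    rw [Finset.sum_comm]
    refine Finset.sum_congr rfl fun c _ => ?_
    simp only [mul_ite, mul_one, mul_zero]
    rw [Finset.sum_ite_eq' Finset.univ (xb hq c.1 c.2)
      (fun y => f y * (phi' b.1 b.2 x₀ * (-1 : ℚ) ^ (b.1.card - c.1.card))),
      if_pos (Finset.mem_univ _)]
    ring
end Stmt17
namespace Stmt17

variable {q n r t : ℕ}

lemma phi_eq (S : Finset (Pos n r)) (A : ↥S → Fin q) (x : XX q n r) :
    phi S A x = if (fun p : ↥S => x ↑p) = A then (1 : ℚ) else 0 := by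
  rw [phi]
  exact if_congr funext_iff.symm rfl rfl

lemma phi'_mem_VV {c : Σ T : Finset (Pos n r), ↥T → Fin (q - 1)}
    (hc : c.1 ∈ SS' n r t) : phi' c.1 c.2 ∈ VV q n r t := by
  obtain ⟨S, hS, hsub⟩ := mem_SS'.1 hc
  have hrep : phi' c.1 c.2 = ∑ A ∈ (Finset.univ : Finset (↥S → Fin q)).filter
      (fun A => ∀ p : ↥c.1, A ⟨↑p, hsub p.2⟩ = Fin.castLE (Nat.sub_le q 1) (c.2 p)),
      phi S A := by
    funext x
    rw [Finset.sum_apply]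
    simp only [phi_eq]
    rw [Finset.sum_ite_eq (Finset.filter _ Finset.univ) (fun p : ↥S => x ↑p)
      (fun _ => (1 : ℚ))]
    rw [phi']
    refine (if_congr ?_ rfl rfl).symm
    rw [Finset.mem_filter]
    simp only [Finset.mem_univ, true_and]
  rw [hrep]
  exact Submodule.sum_mem _ fun A hA =>
    Submodule.subset_span ⟨⟨S, A⟩, mem_FF.2 hS, rfl⟩

lemma mem_W_iff {g : XX q n r → ℚ} :
    (∀ f ∈ VV q n r t, ∑ x : XX q n r, f x * g x = 0) ↔
      ∀ a ∈ FF q n r t, ∑ x : XX q n r, phi a.1 a.2 x * g x = 0 := by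
  constructor
  · intro h a ha
    exact h _ (Submodule.subset_span ⟨a, ha, rfl⟩)
  · intro h f hf
    let L : (XX q n r → ℚ) →ₗ[ℚ] ℚ :=
      { toFun := fun f => ∑ x : XX q n r, f x * g x
        map_add' := fun f₁ f₂ => by
          simp [add_mul, Finset.sum_add_distrib]
        map_smul' := fun cc ff => by
          simp [Finset.mul_sum, mul_assoc] }
    have hVV : VV q n r t ≤ LinearMap.ker L := by
      rw [VV, Submodule.span_le]
      rintro f' ⟨a, ha, rfl⟩
      exact LinearMap.mem_ker.2 (h a ha)
    exact LinearMap.mem_ker.1 (hVV hf)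

end Stmt17
namespace Stmt17

variable {q n r t : ℕ}

lemma mem_suppx {x : XX q n r} {p : Pos n r} : p ∈ suppx x ↔ ((x p : ℕ) ≠ q - 1) := by
  simp [suppx]

lemma cutf_mem (hq : 1 ≤ q) (x : XX q n r) {T : Finset (Pos n r)} {p : Pos n r}
    (hp : p ∈ T) : cutf hq x T p = x p := by
  rw [cutf, if_pos hp]

lemma cutf_not_mem (hq : 1 ≤ q) (x : XX q n r) {T : Finset (Pos n r)} {p : Pos n r}
    (hp : p ∉ T) : cutf hq x T p = ⟨q - 1, by omega⟩ := by
  rw [cutf, if_neg hp]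

lemma neg_one_pow_sub_mul (k₁ k₂ m : ℕ) (h : k₁ + k₂ ≤ m) :
    ((-1 : ℚ)) ^ (m - (k₁ + k₂)) = (-1 : ℚ) ^ (m - k₁) * (-1 : ℚ) ^ k₂ := by
  have h2 : ((-1 : ℚ)) ^ k₂ * (-1 : ℚ) ^ k₂ = 1 := by
    rw [← pow_add]
    exact Even.neg_one_pow ⟨k₂, rfl⟩
  have h3 : (m - (k₁ + k₂)) + k₂ = m - k₁ := by omega
  calc ((-1 : ℚ)) ^ (m - (k₁ + k₂))
      = (-1 : ℚ) ^ (m - (k₁ + k₂)) * ((-1 : ℚ) ^ k₂ * (-1 : ℚ) ^ k₂) := by rw [h2, mul_one]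
    _ = ((-1 : ℚ) ^ (m - (k₁ + k₂)) * (-1 : ℚ) ^ k₂) * (-1 : ℚ) ^ k₂ := by ring
    _ = (-1 : ℚ) ^ (m - k₁) * (-1 : ℚ) ^ k₂ := by rw [← pow_add, h3]

lemma sum_powerset_neg_one_q (M : Finset (Pos n r)) :
    ∑ R ∈ M.powerset, ((-1 : ℚ)) ^ R.card = if M = ∅ then 1 else 0 := by
  calc ∑ R ∈ M.powerset, ((-1 : ℚ)) ^ R.card
      = ((∑ R ∈ M.powerset, (-1 : ℤ) ^ R.card : ℤ) : ℚ) := by push_cast; rfl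
    _ = ((if M = ∅ then 1 else 0 : ℤ) : ℚ) := by
        rw [Finset.sum_powerset_neg_one_pow_card]
    _ = if M = ∅ then 1 else 0 := by split <;> simp

lemma core (hq : 1 ≤ q) {a : Σ S : Finset (Pos n r), ↥S → Fin q}
    (ha : a ∈ FF q n r t) (x₀ : XX q n r) :
    phi a.1 a.2 x₀
      = ∑ Tb ∈ (SS' n r t).filter (fun T => T ⊆ suppx x₀),
          ∑ T ∈ Tb.powerset,
            (-1 : ℚ) ^ (Tb.card - T.card) * phi a.1 a.2 (cutf hq x₀ T) := by
  have hSSS : a.1 ∈ SS n r t := mem_FF.1 ha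
  obtain ⟨S, A⟩ := a
  dsimp only at hSSS ⊢
  set S₁ : Finset (Pos n r) :=
    S.filter (fun p => ∀ h : p ∈ S, ((A ⟨p, h⟩ : ℕ) ≠ q - 1)) with hS₁def
  have mem_S₁ : ∀ p (hp : p ∈ S), (p ∈ S₁ ↔ (A ⟨p, hp⟩ : ℕ) ≠ q - 1) := by
    intro p hp
    simp only [hS₁def, Finset.mem_filter]
    exact ⟨fun h => h.2 hp, fun h => ⟨hp, fun _ => h⟩⟩
  have hS₁S : S₁ ⊆ S := Finset.filter_subset _ _
  by_cases hH : ∀ p (hp : p ∈ S₁), x₀ p = A ⟨p, hS₁S hp⟩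
  · -- the nondegenerate case
    have claim1 : ∀ T : Finset (Pos n r), T ⊆ suppx x₀ →
        phi S A (cutf hq x₀ T) = if S ∩ T = S₁ then (1 : ℚ) else 0 := by
      intro T hT
      rw [phi]
      refine if_congr ⟨fun h => ?_, fun h => ?_⟩ rfl rfl
      · apply Finset.ext
        intro p
        simp only [Finset.mem_inter]
        constructor
        · rintro ⟨hpS, hpT⟩
          have h2 := h ⟨p, hpS⟩
          rw [cutf_mem hq x₀ hpT] at h2
          refine (mem_S₁ p hpS).2 ?_
          rw [← h2]
          exact mem_suppx.1 (hT hpT)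
        · intro hp₁
          have hpS : p ∈ S := hS₁S hp₁
          refine ⟨hpS, ?_⟩
          by_contra hpT
          have h2 := h ⟨p, hpS⟩
          rw [cutf_not_mem hq x₀ hpT] at h2
          have h3 := congrArg (fun z : Fin q => (z : ℕ)) h2
          exact (mem_S₁ p hpS).1 hp₁ h3.symm
      · intro p
        by_cases hpT : ↑p ∈ T
        · rw [cutf_mem hq x₀ hpT]
          have hp₁ : ↑p ∈ S₁ := h ▸ Finset.mem_inter.2 ⟨p.2, hpT⟩
          exact hH ↑p hp₁
        · rw [cutf_not_mem hq x₀ hpT]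
          have hp₁ : ↑p ∉ S₁ := fun hmem => hpT (Finset.mem_inter.1 (h ▸ hmem)).2
          have : ¬((A ⟨↑p, p.2⟩ : ℕ) ≠ q - 1) := fun hne => hp₁ ((mem_S₁ ↑p p.2).2 hne)
          push_neg at this
          exact (Fin.ext this.symm : (⟨q - 1, by omega⟩ : Fin q) = A ⟨↑p, p.2⟩).trans
            (congrArg A rfl)
    set Z : Finset (Pos n r) := (S \ S₁) ∩ suppx x₀ with hZdef
    have hLHS : phi S A x₀ = if Z = ∅ then (1 : ℚ) else 0 := by
      rw [phi]
      refine if_congr ⟨fun h => ?_, fun h => ?_⟩ rfl rfl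
      · rw [Finset.eq_empty_iff_forall_notMem]
        intro p hp
        rw [hZdef, Finset.mem_inter, Finset.mem_sdiff] at hp
        obtain ⟨⟨hpS, hp₁⟩, hpsupp⟩ := hp
        have h2 := h ⟨p, hpS⟩
        have : ¬((A ⟨p, hpS⟩ : ℕ) ≠ q - 1) := fun hne => hp₁ ((mem_S₁ p hpS).2 hne)
        push_neg at this
        exact mem_suppx.1 hpsupp (h2 ▸ this)
      · intro p
        by_cases hp₁ : ↑p ∈ S₁
        · exact hH ↑p hp₁
        · have hpsupp : ↑p ∉ suppx x₀ := fun hmem =>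
            (Finset.eq_empty_iff_forall_notMem.1 h ↑p)
              (Finset.mem_inter.2 ⟨Finset.mem_sdiff.2 ⟨p.2, hp₁⟩, hmem⟩)
          have hx : (x₀ ↑p : ℕ) = q - 1 := by
            by_contra hne; exact hpsupp (mem_suppx.2 hne)
          have : ¬((A ⟨↑p, p.2⟩ : ℕ) ≠ q - 1) := fun hne => hp₁ ((mem_S₁ ↑p p.2).2 hne)
          push_neg at this
          exact Fin.ext (hx.trans this.symm)
    have hS₁supp : S₁ ⊆ suppx x₀ := by
      intro p hp₁
      have h2 := hH p hp₁
      refine mem_suppx.2 ?_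
      rw [h2]
      exact (mem_S₁ p (hS₁S hp₁)).1 hp₁
    have inner : ∀ Tb ∈ (SS' n r t).filter (fun T => T ⊆ suppx x₀),
        ∑ T ∈ Tb.powerset, (-1 : ℚ) ^ (Tb.card - T.card) * phi S A (cutf hq x₀ T)
          = if S₁ ⊆ Tb ∧ Tb ⊆ S then (-1 : ℚ) ^ (Tb.card - S₁.card) else 0 := by
      intro Tb hTb
      rw [Finset.mem_filter] at hTb
      have hcong : ∀ T ∈ Tb.powerset,
          (-1 : ℚ) ^ (Tb.card - T.card) * phi S A (cutf hq x₀ T)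
            = if S ∩ T = S₁ then (-1 : ℚ) ^ (Tb.card - T.card) else 0 := by
        intro T hT
        rw [claim1 T ((Finset.mem_powerset.1 hT).trans hTb.2), mul_ite, mul_one, mul_zero]
      rw [Finset.sum_congr rfl hcong, ← Finset.sum_filter]
      by_cases h1 : S₁ ⊆ Tb
      · have hbij : ∑ T ∈ Tb.powerset.filter (fun T => S ∩ T = S₁),
            (-1 : ℚ) ^ (Tb.card - T.card)
            = ∑ R ∈ (Tb \ S).powerset, (-1 : ℚ) ^ (Tb.card - (S₁.card + R.card)) := by
          refine Finset.sum_bij' (fun T _ => T \ S) (fun R _ => S₁ ∪ R) ?_ ?_ ?_ ?_ ?_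
          · intro T hT
            rw [Finset.mem_filter, Finset.mem_powerset] at hT
            exact Finset.mem_powerset.2 (Finset.sdiff_subset_sdiff hT.1 Finset.Subset.rfl)
          · intro R hR
            rw [Finset.mem_powerset] at hR
            rw [Finset.mem_filter, Finset.mem_powerset]
            constructor
            · exact Finset.union_subset h1 (hR.trans Finset.sdiff_subset)
            · apply Finset.ext
              intro p
              simp only [Finset.mem_inter, Finset.mem_union]
              constructor
              · rintro ⟨hpS, hp | hp⟩
                · exact hp
                · exact absurd hpS (Finset.mem_sdiff.1 (hR hp)).2
              · intro hp
                exact ⟨hS₁S hp, Or.inl hp⟩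
          · intro T hT
            rw [Finset.mem_filter] at hT
            apply Finset.ext
            intro p
            simp only [Finset.mem_union, Finset.mem_sdiff]
            constructor
            · rintro (hp | ⟨hp, -⟩)
              · exact (Finset.mem_inter.1 (hT.2 ▸ hp)).2
              · exact hp
            · intro hp
              by_cases hpS : p ∈ S
              · exact Or.inl (hT.2 ▸ Finset.mem_inter.2 ⟨hpS, hp⟩)
              · exact Or.inr ⟨hp, hpS⟩
          · intro R hR
            rw [Finset.mem_powerset] at hR
            apply Finset.ext
            intro p
            simp only [Finset.mem_sdiff, Finset.mem_union]
            constructor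
            · rintro ⟨hp | hp, hpS⟩
              · exact absurd (hS₁S hp) hpS
              · exact hp
            · intro hp
              exact ⟨Or.inr hp, (Finset.mem_sdiff.1 (hR hp)).2⟩
          · intro T hT
            rw [Finset.mem_filter] at hT
            congr 2
            have hdisj : Disjoint S₁ (T \ S) := by
              rw [Finset.disjoint_left]
              intro p hp hp2
              exact (Finset.mem_sdiff.1 hp2).2 (hS₁S hp)
            have hunion : S₁ ∪ (T \ S) = T := by
              apply Finset.ext
              intro p
              simp only [Finset.mem_union, Finset.mem_sdiff]
              constructor
              · rintro (hp | ⟨hp, -⟩)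
                · exact (Finset.mem_inter.1 (hT.2 ▸ hp)).2
                · exact hp
              · intro hp
                by_cases hpS : p ∈ S
                · exact Or.inl (hT.2 ▸ Finset.mem_inter.2 ⟨hpS, hp⟩)
                · exact Or.inr ⟨hp, hpS⟩
            have hc2 : (S₁ ∪ (T \ S)).card = S₁.card + (T \ S).card :=
              Finset.card_union_of_disjoint hdisj
            rw [hunion] at hc2
            exact hc2
        rw [hbij]
        have hsign : ∀ R ∈ (Tb \ S).powerset,
            (-1 : ℚ) ^ (Tb.card - (S₁.card + R.card))
              = (-1 : ℚ) ^ (Tb.card - S₁.card) * (-1 : ℚ) ^ R.card := by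
          intro R hR
          rw [Finset.mem_powerset] at hR
          have hdisj : Disjoint S₁ R := by
            rw [Finset.disjoint_left]
            intro p hp hp2
            exact (Finset.mem_sdiff.1 (hR hp2)).2 (hS₁S hp)
          have hsub : S₁ ∪ R ⊆ Tb :=
            Finset.union_subset h1 (hR.trans Finset.sdiff_subset)
          have hcard : S₁.card + R.card ≤ Tb.card := by
            rw [← Finset.card_union_of_disjoint hdisj]
            exact Finset.card_le_card hsub
          exact neg_one_pow_sub_mul _ _ _ hcard
        rw [Finset.sum_congr rfl hsign, ← Finset.mul_sum, sum_powerset_neg_one_q]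
        by_cases h2 : Tb ⊆ S
        · rw [if_pos (Finset.sdiff_eq_empty_iff_subset.2 h2), mul_one, if_pos ⟨h1, h2⟩]
        · rw [if_neg (fun hc => h2 (Finset.sdiff_eq_empty_iff_subset.1 hc)), mul_zero,
            if_neg (fun hc => h2 hc.2)]
      · rw [Finset.filter_false_of_mem, Finset.sum_empty, if_neg (fun hc => h1 hc.1)]
        intro T hT hST
        exact h1 (hST ▸ (Finset.inter_subset_right.trans (Finset.mem_powerset.1 hT)))
    rw [Finset.sum_congr rfl inner, ← Finset.sum_filter, hLHS]
    have hbij2 : ∑ Tb ∈ ((SS' n r t).filter (fun T => T ⊆ suppx x₀)).filter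
          (fun Tb => S₁ ⊆ Tb ∧ Tb ⊆ S), (-1 : ℚ) ^ (Tb.card - S₁.card)
        = ∑ U ∈ Z.powerset, (-1 : ℚ) ^ U.card := by
      refine Finset.sum_bij' (fun Tb _ => Tb \ S₁) (fun U _ => S₁ ∪ U) ?_ ?_ ?_ ?_ ?_
      · intro Tb hTb
        rw [Finset.mem_filter, Finset.mem_filter] at hTb
        obtain ⟨⟨-, hsupp⟩, h1, h2⟩ := hTb
        rw [Finset.mem_powerset, hZdef]
        intro p hp
        rw [Finset.mem_sdiff] at hp
        exact Finset.mem_inter.2 ⟨Finset.mem_sdiff.2 ⟨h2 hp.1, hp.2⟩, hsupp hp.1⟩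
      · intro U hU
        rw [Finset.mem_powerset] at hU
        have hUZ : U ⊆ (S \ S₁) ∩ suppx x₀ := hZdef ▸ hU
        rw [Finset.mem_filter, Finset.mem_filter]
        refine ⟨⟨?_, ?_⟩, Finset.subset_union_left, ?_⟩
        · refine mem_SS'.2 ⟨S, hSSS, Finset.union_subset hS₁S ?_⟩
          intro p hp
          exact (Finset.mem_sdiff.1 (Finset.mem_inter.1 (hUZ hp)).1).1
        · refine Finset.union_subset hS₁supp ?_
          intro p hp
          exact (Finset.mem_inter.1 (hUZ hp)).2
        · refine Finset.union_subset hS₁S ?_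
          intro p hp
          exact (Finset.mem_sdiff.1 (Finset.mem_inter.1 (hUZ hp)).1).1
      · intro Tb hTb
        rw [Finset.mem_filter] at hTb
        exact Finset.union_sdiff_of_subset hTb.2.1
      · intro U hU
        rw [Finset.mem_powerset] at hU
        have hUZ : U ⊆ (S \ S₁) ∩ suppx x₀ := hZdef ▸ hU
        refine Finset.union_sdiff_cancel_left ?_
        rw [Finset.disjoint_left]
        intro p hp hp2
        exact (Finset.mem_sdiff.1 (Finset.mem_inter.1 (hUZ hp2)).1).2 hp
      · intro Tb hTb
        rw [Finset.mem_filter] at hTb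
        rw [Finset.card_sdiff_of_subset hTb.2.1]
    rw [hbij2, sum_powerset_neg_one_q]
  · -- degenerate case: both sides vanish
    have hLHS : phi S A x₀ = 0 := by
      rw [phi, if_neg]
      intro h
      exact hH fun p hp => h ⟨p, hS₁S hp⟩
    rw [hLHS]
    refine (Finset.sum_eq_zero fun Tb hTb => Finset.sum_eq_zero fun T hT => ?_).symm
    have hphi : phi S A (cutf hq x₀ T) = 0 := by
      rw [phi, if_neg]
      intro h
      refine hH fun p hp => ?_
      have hpS : p ∈ S := hS₁S hp
      by_cases hpT : p ∈ T
      · have h2 := h ⟨p, hpS⟩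
        rw [cutf_mem hq x₀ hpT] at h2
        exact h2
      · have h2 := h ⟨p, hpS⟩
        rw [cutf_not_mem hq x₀ hpT] at h2
        have h3 := congrArg (fun z : Fin q => (z : ℕ)) h2
        exact absurd h3.symm ((mem_S₁ p hpS).1 hp)
    rw [hphi, mul_zero]

end Stmt17
namespace Stmt17

variable {q n r t : ℕ}

lemma xb_eq_cutf (hq : 1 ≤ q) {c b : Σ T : Finset (Pos n r), ↥T → Fin (q - 1)}
    (h : pre c b) : xb hq c.1 c.2 = cutf hq (xb hq b.1 b.2) c.1 := by
  obtain ⟨hsub, hval⟩ := h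
  funext p
  by_cases hp : p ∈ c.1
  · rw [xb_mem hq c.2 hp, cutf_mem hq _ hp, xb_mem hq b.2 (hsub hp), hval ⟨p, hp⟩]
  · rw [xb_not_mem hq c.2 hp, cutf_not_mem hq _ hp]

lemma inner_reindex (hq : 1 ≤ q) {b : Σ T : Finset (Pos n r), ↥T → Fin (q - 1)}
    (hb : b ∈ FF' q n r t) (F : XX q n r → ℚ) :
    ∑ c ∈ (FF' q n r t).filter (fun c => pre c b),
        (-1 : ℚ) ^ (b.1.card - c.1.card) * F (xb hq c.1 c.2)
      = ∑ T ∈ b.1.powerset,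
        (-1 : ℚ) ^ (b.1.card - T.card) * F (cutf hq (xb hq b.1 b.2) T) := by
  refine Finset.sum_bij' (fun c _ => c.1)
    (fun T hT => ⟨T, fun p => b.2 ⟨↑p, Finset.mem_powerset.1 hT p.2⟩⟩) ?_ ?_ ?_ ?_ ?_
  · intro c hc
    exact Finset.mem_powerset.2 (Finset.mem_filter.1 hc).2.1
  · intro T hT
    rw [Finset.mem_filter]
    refine ⟨mem_FF'.2 (SS'_downward (mem_FF'.1 hb) (Finset.mem_powerset.1 hT)), ?_, ?_⟩
    · exact Finset.mem_powerset.1 hT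
    · intro p
      rfl
  · intro c hc
    obtain ⟨-, hsub, hval⟩ := Finset.mem_filter.1 hc
    exact sigma_ext rfl fun p hp hp' => (hval ⟨p, hp'⟩)
  · intro T hT
    rfl
  · intro c hc
    rw [xb_eq_cutf hq (Finset.mem_filter.1 hc).2]

lemma cutf_congr (hq : 1 ≤ q) {x y : XX q n r} {T U : Finset (Pos n r)} (hTU : T ⊆ U)
    (h : ∀ p ∈ U, x p = y p) : cutf hq x T = cutf hq y T := by
  funext p
  by_cases hp : p ∈ T
  · rw [cutf_mem hq _ hp, cutf_mem hq _ hp, h p (hTU hp)]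
  · rw [cutf_not_mem hq _ hp, cutf_not_mem hq _ hp]

/-- The extension of `x₀` restricted to `T ⊆ supp x₀` to values in `{1,...,q-1}`. -/
def lowf (x₀ : XX q n r) (T : Finset (Pos n r)) (hT : T ⊆ suppx x₀) : ↥T → Fin (q - 1) :=
  fun p => ⟨(x₀ ↑p : ℕ), by
    have h1 : ((x₀ ↑p : ℕ) ≠ q - 1) := mem_suppx.1 (hT p.2)
    have h2 := (x₀ ↑p).isLt
    omega⟩

lemma star (hq : 1 ≤ q) {a : Σ S : Finset (Pos n r), ↥S → Fin q}
    (ha : a ∈ FF q n r t) (x₀ : XX q n r) :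
    ∑ y : XX q n r, phi a.1 a.2 y * gdef hq t x₀ y = 0 := by
  rw [ip_gdef, sub_eq_zero]
  have step1 : ∀ b ∈ FF' q n r t,
      phi' b.1 b.2 x₀ * ∑ c ∈ (FF' q n r t).filter (fun c => pre c b),
          (-1 : ℚ) ^ (b.1.card - c.1.card) * phi a.1 a.2 (xb hq c.1 c.2)
        = phi' b.1 b.2 x₀ * ∑ T ∈ b.1.powerset,
          (-1 : ℚ) ^ (b.1.card - T.card) * phi a.1 a.2 (cutf hq (xb hq b.1 b.2) T) := by
    intro b hb
    rw [inner_reindex hq hb]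
  rw [Finset.sum_congr rfl step1]
  simp only [phi', ite_mul, one_mul, zero_mul]
  rw [← Finset.sum_filter]
  have step2 : ∑ b ∈ (FF' q n r t).filter
        (fun b : Σ T : Finset (Pos n r), ↥T → Fin (q - 1) =>
          ∀ p : ↥b.1, x₀ ↑p = Fin.castLE (Nat.sub_le q 1) (b.2 p)),
        ∑ T ∈ b.1.powerset,
          (-1 : ℚ) ^ (b.1.card - T.card) * phi a.1 a.2 (cutf hq (xb hq b.1 b.2) T)
      = ∑ Tb ∈ (SS' n r t).filter (fun T => T ⊆ suppx x₀),
        ∑ T ∈ Tb.powerset,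
          (-1 : ℚ) ^ (Tb.card - T.card) * phi a.1 a.2 (cutf hq x₀ T) := by
    refine Finset.sum_bij' (fun b _ => b.1) (fun T hT => ⟨T, lowf x₀ T ?_⟩) ?_ ?_ ?_ ?_ ?_
    · exact (Finset.mem_filter.1 hT).2
    · intro b hb
      obtain ⟨hb1, hb2⟩ := Finset.mem_filter.1 hb
      rw [Finset.mem_filter]
      refine ⟨mem_FF'.1 hb1, ?_⟩
      intro p hp
      refine mem_suppx.2 ?_
      rw [hb2 ⟨p, hp⟩]
      simp only [Fin.coe_castLE]
      have := (b.2 ⟨p, hp⟩).isLt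
      omega
    · intro T hT
      rw [Finset.mem_filter]
      obtain ⟨hT1, hT2⟩ := Finset.mem_filter.1 hT
      refine ⟨mem_FF'.2 hT1, ?_⟩
      intro p
      exact Fin.ext rfl
    · intro b hb
      obtain ⟨hb1, hb2⟩ := Finset.mem_filter.1 hb
      refine sigma_ext rfl fun p hp hp' => ?_
      refine Fin.ext ?_
      have h2 := congrArg (fun z : Fin q => (z : ℕ)) (hb2 ⟨p, hp⟩)
      simp only [Fin.coe_castLE] at h2
      exact h2
    · intro T hT
      rfl
    · intro b hb
      obtain ⟨hb1, hb2⟩ := Finset.mem_filter.1 hb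
      refine Finset.sum_congr rfl fun T hT => ?_
      have hcc : cutf hq (xb hq b.1 b.2) T = cutf hq x₀ T := by
        refine cutf_congr hq (Finset.mem_powerset.1 hT) fun p hp => ?_
        rw [xb_mem hq b.2 hp]
        exact (hb2 ⟨p, hp⟩).symm
      rw [hcc]
  rw [step2]
  exact core hq ha x₀

end Stmt17
namespace Stmt17

variable {q n r t : ℕ}

lemma card_pre_le {b : Σ T : Finset (Pos n r), ↥T → Fin (q - 1)} (hb : b ∈ FF' q n r t) :
    ((FF' q n r t).filter (fun c => pre c b)).card ≤ 2 ^ t := by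
  have h1 : ((FF' q n r t).filter (fun c => pre c b)).card ≤ b.1.powerset.card := by
    apply Finset.card_le_card_of_injOn (fun c => c.1)
    · intro c hc
      exact Finset.mem_powerset.2 ((Finset.mem_filter.1 hc).2).1
    · intro c hc c' hc' h
      obtain ⟨hs, hv⟩ := (Finset.mem_filter.1 hc).2
      obtain ⟨hs', hv'⟩ := (Finset.mem_filter.1 hc').2
      refine sigma_ext h fun p hp hp' => ?_
      rw [← hv ⟨p, hp⟩, ← hv' ⟨p, hp'⟩]
  refine h1.trans ?_
  rw [Finset.card_powerset]
  exact Nat.pow_le_pow_right (by norm_num) (card_SS'_le (mem_FF'.1 hb))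

lemma card_SS'_le_mul : (SS' n r t).card ≤ (SS n r t).card * 2 ^ t := by
  have h1 : SS' n r t ⊆ (SS n r t).biUnion Finset.powerset := by
    intro T hT
    obtain ⟨S, hS, hTS⟩ := mem_SS'.1 hT
    exact Finset.mem_biUnion.2 ⟨S, hS, Finset.mem_powerset.2 hTS⟩
  calc (SS' n r t).card ≤ ((SS n r t).biUnion Finset.powerset).card :=
        Finset.card_le_card h1
    _ ≤ ∑ S ∈ SS n r t, S.powerset.card := Finset.card_biUnion_le
    _ ≤ (SS n r t).card * 2 ^ t := by
        refine (Finset.sum_le_card_nsmul _ _ (2 ^ t) fun S hS => ?_).trans ?_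
        · rw [Finset.card_powerset, card_SS hS]
        · rw [smul_eq_mul]

lemma card_filterP_le (x₀ : XX q n r) :
    ((FF' q n r t).filter (fun b : Σ T : Finset (Pos n r), ↥T → Fin (q - 1) =>
        ∀ p : ↥b.1, x₀ ↑p = Fin.castLE (Nat.sub_le q 1) (b.2 p))).card
      ≤ (SS' n r t).card := by
  apply Finset.card_le_card_of_injOn (fun b => b.1)
  · intro b hb
    exact mem_FF'.1 (Finset.mem_filter.1 hb).1
  · intro b hb b' hb' h
    refine sigma_ext h fun p hp hp' => ?_
    have h1 := (Finset.mem_filter.1 hb).2 ⟨p, hp⟩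
    have h2 := (Finset.mem_filter.1 hb').2 ⟨p, hp'⟩
    exact Fin.castLE_injective _ (h1.symm.trans h2)

lemma card_FF_ge (hq2 : 2 ≤ q) : (SS n r t).card * 2 ^ t ≤ (FF q n r t).card := by
  rw [FF, Finset.card_sigma]
  calc (SS n r t).card * 2 ^ t = ∑ _S ∈ SS n r t, 2 ^ t := by
        rw [Finset.sum_const, smul_eq_mul]
    _ ≤ ∑ S ∈ SS n r t, (Finset.univ : Finset (↥S → Fin q)).card := by
        refine Finset.sum_le_sum fun S hS => ?_
        rw [Finset.card_univ, Fintype.card_fun, Fintype.card_fin, Fintype.card_coe,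
          card_SS hS]
        exact Nat.pow_le_pow_left hq2 t

lemma gdef_off (hq : 1 ≤ q) (x₀ : XX q n r) {y : XX q n r}
    (hy : y ∉ (FF' q n r t).image (fun c => xb hq c.1 c.2)) :
    gdef hq t x₀ y = if y = x₀ then 1 else 0 := by
  rw [gdef, corr]
  rw [Finset.sum_eq_zero, sub_zero]
  intro b hb
  rw [Finset.sum_eq_zero, mul_zero]
  intro c hc
  rw [if_neg, mul_zero]
  intro h
  exact hy (Finset.mem_image.2 ⟨c, (Finset.mem_filter.1 hc).1, h.symm⟩)

lemma gdef_int (hq : 1 ≤ q) (x₀ y : XX q n r) : ∃ z : ℤ, gdef hq t x₀ y = (z : ℚ) := by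
  refine ⟨(if y = x₀ then 1 else 0) - ∑ b ∈ FF' q n r t,
    (if (∀ p : ↥b.1, x₀ ↑p = Fin.castLE (Nat.sub_le q 1) (b.2 p)) then 1 else 0) *
      ∑ c ∈ (FF' q n r t).filter (fun c => pre c b),
        (-1 : ℤ) ^ (b.1.card - c.1.card) * (if y = xb hq c.1 c.2 then 1 else 0), ?_⟩
  simp only [gdef, corr, phi']
  push_cast [apply_ite (fun z : ℤ => (z : ℚ))]
  norm_num

lemma phi'_nonneg (T : Finset (Pos n r)) (b : ↥T → Fin (q - 1)) (x : XX q n r) :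
    0 ≤ phi' T b x := by
  rw [phi']; split <;> norm_num

lemma gdef_bound (hq : 1 ≤ q) (hq2 : 2 ≤ q) (hr : 1 ≤ r) (htnr : t ≤ n * r)
    (x₀ : XX q n r) :
    ∑ y : XX q n r, |gdef hq t x₀ y| ≤ 2 ^ (t + 1) * ((FF q n r t).card : ℚ) := by
  have habs : ∀ y, |gdef hq t x₀ y| ≤ (if y = x₀ then (1 : ℚ) else 0)
      + ∑ b ∈ FF' q n r t, phi' b.1 b.2 x₀ *
          ∑ c ∈ (FF' q n r t).filter (fun c => pre c b),
            (if y = xb hq c.1 c.2 then (1 : ℚ) else 0) := by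
    intro y
    rw [gdef]
    refine (abs_sub _ _).trans (add_le_add ?_ ?_)
    · split <;> norm_num
    · rw [corr]
      refine (Finset.abs_sum_le_sum_abs _ _).trans (Finset.sum_le_sum fun b hb => ?_)
      rw [abs_mul, abs_of_nonneg (phi'_nonneg _ _ _)]
      refine mul_le_mul_of_nonneg_left ?_ (phi'_nonneg _ _ _)
      refine (Finset.abs_sum_le_sum_abs _ _).trans (Finset.sum_le_sum fun c hc => ?_)
      rw [abs_mul, abs_pow, abs_neg, abs_one, one_pow, one_mul]
      refine le_of_eq ?_
      split <;> norm_num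
  have hsum : ∑ y : XX q n r, ((if y = x₀ then (1 : ℚ) else 0)
      + ∑ b ∈ FF' q n r t, phi' b.1 b.2 x₀ *
          ∑ c ∈ (FF' q n r t).filter (fun c => pre c b),
            (if y = xb hq c.1 c.2 then (1 : ℚ) else 0))
      = 1 + ∑ b ∈ FF' q n r t, phi' b.1 b.2 x₀ *
          (((FF' q n r t).filter (fun c => pre c b)).card : ℚ) := by
    rw [Finset.sum_add_distrib]
    congr 1
    · rw [Finset.sum_ite_eq' Finset.univ x₀ (fun _ => (1 : ℚ)), if_pos (Finset.mem_univ _)]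
    · rw [Finset.sum_comm]
      refine Finset.sum_congr rfl fun b _ => ?_
      rw [← Finset.mul_sum]
      congr 1
      rw [Finset.sum_comm]
      rw [Finset.sum_congr rfl (fun c _ => by
        rw [Finset.sum_ite_eq' Finset.univ (xb hq c.1 c.2) (fun _ => (1 : ℚ)),
          if_pos (Finset.mem_univ _)])]
      rw [Finset.sum_const, nsmul_eq_mul, mul_one]
  have hb1 : ∑ b ∈ FF' q n r t, phi' b.1 b.2 x₀ *
      (((FF' q n r t).filter (fun c => pre c b)).card : ℚ)
      ≤ ∑ b ∈ FF' q n r t, phi' b.1 b.2 x₀ * (2 ^ t : ℚ) := by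
    refine Finset.sum_le_sum fun b hb => ?_
    refine mul_le_mul_of_nonneg_left ?_ (phi'_nonneg _ _ _)
    exact_mod_cast Nat.cast_le.2 (card_pre_le hb)
  have hb2 : ∑ b ∈ FF' q n r t, phi' b.1 b.2 x₀ * (2 ^ t : ℚ)
      = (((FF' q n r t).filter (fun b : Σ T : Finset (Pos n r), ↥T → Fin (q - 1) =>
          ∀ p : ↥b.1, x₀ ↑p = Fin.castLE (Nat.sub_le q 1) (b.2 p))).card : ℚ) * 2 ^ t := by
    rw [← Finset.sum_mul]
    congr 1
    simp only [phi']
    rw [Finset.sum_boole]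
  have hnat : 1 + ((SS n r t).card * 2 ^ t) * 2 ^ t ≤ 2 ^ (t + 1) * (FF q n r t).card := by
    have h1 : (SS n r t).card * 2 ^ t ≤ (FF q n r t).card := card_FF_ge hq2
    have h2 : 1 ≤ (SS n r t).card := Finset.card_pos.2 (SS_nonempty hr htnr)
    have h3 : 1 ≤ 2 ^ t := Nat.one_le_two_pow
    have h4 : 2 ^ (t + 1) = 2 ^ t * 2 := pow_succ 2 t
    nlinarith [h1, h2, h3]
  calc ∑ y : XX q n r, |gdef hq t x₀ y| ≤ _ := Finset.sum_le_sum fun y _ => habs y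
    _ = 1 + ∑ b ∈ FF' q n r t, phi' b.1 b.2 x₀ *
          (((FF' q n r t).filter (fun c => pre c b)).card : ℚ) := hsum
    _ ≤ 1 + (((FF' q n r t).filter (fun b : Σ T : Finset (Pos n r), ↥T → Fin (q - 1) =>
          ∀ p : ↥b.1, x₀ ↑p = Fin.castLE (Nat.sub_le q 1) (b.2 p))).card : ℚ) * 2 ^ t := by
        rw [← hb2]
        exact add_le_add_right hb1 _
    _ ≤ 1 + (((SS n r t).card * 2 ^ t : ℕ) : ℚ) * 2 ^ t := by
        refine add_le_add_right (mul_le_mul_of_nonneg_right ?_ (by positivity)) _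
        exact_mod_cast ((card_filterP_le x₀).trans card_SS'_le_mul)
    _ ≤ 2 ^ (t + 1) * ((FF q n r t).card : ℚ) := by
        calc (1 : ℚ) + (((SS n r t).card * 2 ^ t : ℕ) : ℚ) * 2 ^ t
            = ((1 + ((SS n r t).card * 2 ^ t) * 2 ^ t : ℕ) : ℚ) := by push_cast; ring
          _ ≤ ((2 ^ (t + 1) * (FF q n r t).card : ℕ) : ℚ) := Nat.cast_le.2 hnat
          _ = 2 ^ (t + 1) * ((FF q n r t).card : ℚ) := by push_cast; ring

end Stmt17

open Stmt17

/-- The orthogonal complement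
`V^⊥ = {g : X → ℚ : ∑_{x ∈ X} f(x) g(x) = 0 for all f ∈ V}` has a `ℚ`-basis of
integer-valued functions `g`, each satisfying `‖g‖₁ = ∑_{x ∈ X} |g(x)| ≤ 2^{t+1} |ℱ|`. -/
theorem stmt17 (q n r t : ℕ) (hq : 2 ≤ q) (hn : 1 ≤ n) (hr : 1 ≤ r) (ht : 1 ≤ t)
    (htnr : t ≤ n * r) :
    ∃ G : Finset (XX q n r → ℚ),
      (∀ g ∈ G, (∀ x, ∃ z : ℤ, g x = (z : ℚ)) ∧
        ∑ x : XX q n r, |g x| ≤ 2 ^ (t + 1) * ((FF q n r t).card : ℚ)) ∧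
      LinearIndependent ℚ (fun g : ↥G => (g : XX q n r → ℚ)) ∧
      (Submodule.span ℚ (G : Set (XX q n r → ℚ)) : Set (XX q n r → ℚ)) =
        {g | ∀ f ∈ VV q n r t, ∑ x : XX q n r, f x * g x = 0} := by
  have hq1 : 1 ≤ q := by omega
  set E : Finset (XX q n r) := (FF' q n r t).image (fun c => xb hq1 c.1 c.2) with hE
  set K : Finset (XX q n r) := Finset.univ \ E with hK
  set G : Finset (XX q n r → ℚ) := K.image (gdef hq1 t) with hG
  have hKmem : ∀ {y : XX q n r}, y ∈ K ↔ y ∉ E := by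
    intro y
    rw [hK, Finset.mem_sdiff]
    exact ⟨fun h => h.2, fun h => ⟨Finset.mem_univ y, h⟩⟩
  have hgdW : ∀ x₀ : XX q n r, ∀ f ∈ VV q n r t,
      ∑ y : XX q n r, f y * gdef hq1 t x₀ y = 0 := by
    intro x₀
    exact mem_W_iff.2 fun a ha => star hq1 ha x₀
  refine ⟨G, ?_, ?_, ?_⟩
  · intro g hg
    obtain ⟨x₀, hx₀, rfl⟩ := Finset.mem_image.1 hg
    exact ⟨fun y => gdef_int hq1 x₀ y, gdef_bound hq1 hq hr htnr x₀⟩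
  · rw [Fintype.linearIndependent_iff]
    intro coef hcoef i
    obtain ⟨xi, hxiK, hgi⟩ := Finset.mem_image.1 i.2
    have hxiE : xi ∉ E := hKmem.1 hxiK
    have heval := congrFun hcoef xi
    rw [Finset.sum_apply] at heval
    rw [Finset.sum_eq_single i] at heval
    · have hval : (i : XX q n r → ℚ) xi = 1 := by
        rw [← hgi, gdef_off hq1 xi hxiE, if_pos rfl]
      rw [Pi.smul_apply, hval, smul_eq_mul, mul_one] at heval
      exact heval
    · intro j _ hji
      obtain ⟨xj, hxjK, hgj⟩ := Finset.mem_image.1 j.2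
      have hvj : (j : XX q n r → ℚ) xi = if xi = xj then 1 else 0 := by
        rw [← hgj, gdef_off hq1 xj hxiE]
      rw [Pi.smul_apply, hvj]
      rw [if_neg, smul_zero]
      intro hxx
      apply hji
      apply Subtype.ext
      rw [← hgi, ← hgj, hxx]
    · intro hi
      exact absurd (Finset.mem_univ i) hi
  · apply Set.Subset.antisymm
    · intro g hg
      have hg' : g ∈ Submodule.span ℚ (G : Set (XX q n r → ℚ)) := hg
      clear hg
      intro f hf
      induction hg' using Submodule.span_induction with
      | mem g hgmem =>
        obtain ⟨x₀, hx₀, rfl⟩ := Finset.mem_image.1 (Finset.mem_coe.1 hgmem)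
        exact hgdW x₀ f hf
      | zero => simp
      | add g₁ g₂ h₁ h₂ ih₁ ih₂ =>
        simp only [Pi.add_apply, mul_add, Finset.sum_add_distrib, ih₁, ih₂, add_zero]
      | smul cc gg hgg ih =>
        simp only [Pi.smul_apply, smul_eq_mul]
        rw [Finset.sum_congr rfl (fun y _ => by ring_nf; rw [mul_comm (f y) cc, mul_assoc]),
          ← Finset.mul_sum, ih, mul_zero]
    · intro g hg
      simp only [Set.mem_setOf_eq] at hg
      set h' : XX q n r → ℚ := g - ∑ x ∈ K, g x • gdef hq1 t x with hh'
      have hK0 : ∀ y ∈ K, h' y = 0 := by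
        intro y hy
        rw [hh']
        simp only [Pi.sub_apply, Finset.sum_apply, Pi.smul_apply, smul_eq_mul]
        rw [Finset.sum_congr rfl (fun x _ => by
          rw [gdef_off hq1 x (hKmem.1 hy)])]
        simp only [mul_ite, mul_one, mul_zero]
        rw [Finset.sum_ite_eq K y g, if_pos hy, sub_self]
      have hW' : ∀ f ∈ VV q n r t, ∑ y : XX q n r, f y * h' y = 0 := by
        intro f hf
        calc ∑ y : XX q n r, f y * h' y
            = ∑ y : XX q n r, (f y * g y - ∑ x ∈ K, g x * (f y * gdef hq1 t x y)) := by
              refine Finset.sum_congr rfl fun y _ => ?_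
              simp only [hh', Pi.sub_apply, Finset.sum_apply, Pi.smul_apply, smul_eq_mul]
              rw [mul_sub, Finset.mul_sum]
              congr 1
              exact Finset.sum_congr rfl fun x _ => by ring
          _ = ∑ y : XX q n r, f y * g y
              - ∑ x ∈ K, g x * ∑ y : XX q n r, f y * gdef hq1 t x y := by
              rw [Finset.sum_sub_distrib]
              congr 1
              rw [Finset.sum_comm]
              exact Finset.sum_congr rfl fun x _ => by rw [Finset.mul_sum]
          _ = 0 := by
              rw [hg f hf, Finset.sum_congr rfl (fun x _ => by
                rw [hgdW x f hf, mul_zero]), Finset.sum_const, smul_zero, sub_zero]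
      have hEzero : ∀ m : ℕ, ∀ c : Σ T : Finset (Pos n r), ↥T → Fin (q - 1),
          c ∈ FF' q n r t → t + 1 - c.1.card ≤ m → h' (xb hq1 c.1 c.2) = 0 := by
        intro m
        induction m with
        | zero =>
          intro c hc hle
          have := card_SS'_le (mem_FF'.1 hc)
          omega
        | succ m ih =>
          intro c hc hle
          have hphi := hW' (phi' c.1 c.2) (phi'_mem_VV (mem_FF'.1 hc))
          have hsum : ∑ y : XX q n r, phi' c.1 c.2 y * h' y
              = ∑ d ∈ FF' q n r t,
                  phi' c.1 c.2 (xb hq1 d.1 d.2) * h' (xb hq1 d.1 d.2) := by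
            rw [← Finset.sum_image (f := fun y => phi' c.1 c.2 y * h' y)
              (fun x _ y _ hxy => xb_injOn hq1 hxy)]
            refine (Finset.sum_subset (Finset.subset_univ _) ?_).symm
            intro y _ hyE
            rw [hK0 y (hKmem.2 hyE), mul_zero]
          rw [hsum] at hphi
          rw [Finset.sum_congr rfl (fun d _ => by
            rw [phi'_xb hq1 c d, ite_mul, one_mul, zero_mul])] at hphi
          rw [← Finset.sum_filter] at hphi
          rw [Finset.sum_eq_single_of_mem c
            (Finset.mem_filter.2 ⟨hc, pre_refl c⟩) ?_] at hphi
          · exact hphi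
          · intro d hd hdc
            obtain ⟨hdFF, hpre⟩ := Finset.mem_filter.1 hd
            have hne : c.1 ≠ d.1 := fun h => hdc (pre_eq_of_fst_eq hpre h).symm
            have hcard : c.1.card < d.1.card :=
              Finset.card_lt_card ⟨hpre.1, fun hds => hne (Finset.Subset.antisymm hpre.1 hds)⟩
            exact ih d hdFF (by omega)
      have hzero : h' = 0 := by
        funext y
        by_cases hyE : y ∈ E
        · obtain ⟨c, hcFF, rfl⟩ := Finset.mem_image.1 hyE
          exact hEzero (t + 1) c hcFF (by omega)
        · exact hK0 y (hKmem.2 hyE)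
      have hrepr : g = ∑ x ∈ K, g x • gdef hq1 t x := by
        rw [hh'] at hzero
        exact sub_eq_zero.1 hzero
      have : g ∈ Submodule.span ℚ (G : Set (XX q n r → ℚ)) := by
        rw [hrepr]
        exact Submodule.sum_mem _ fun x hx => Submodule.smul_mem _ _
          (Submodule.subset_span (Finset.mem_coe.2 (Finset.mem_image_of_mem _ hx)))
      exact this
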